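/- Every caterpillar is graceful. (A caterpillar is a tree in which all vertices are within distance 1 of a central path.) -/

import Mathlib

open SimpleGraph

/-- The induced label of an edge: the absolute difference of endpoint labels. -/
def edgeLabel {V : Type*} (f : V → ℕ) : Sym2 V → ℕ :=
  Sym2.lift ⟨fun a b => ((f a : ℤ) - (f b : ℤ)).natAbs,
    fun a b => by dsimp only; omega⟩

/-- `f` is a graceful labeling of `G`: the vertex labels are exactly
`{0, …, |V| - 1}` and the induced edge labels are pairwise distinct. -/
def GracefulLabeling {V : Type*} [Fintype V] (G : SimpleGraph V) (f : V → ℕ) : Prop :=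
  Function.Injective f ∧ (∀ v, f v < Fintype.card V) ∧
    (∀ k, k < Fintype.card V → ∃ v, f v = k) ∧
    Set.InjOn (edgeLabel f) G.edgeSet

@[simp] lemma edgeLabel_mk {V : Type*} (f : V → ℕ) (u v : V) :
    edgeLabel f s(u, v) = ((f u : ℤ) - (f v : ℤ)).natAbs := rfl

lemma card_ne {V : Type*} [Fintype V] (x : V) [Fintype {v // v ≠ x}] :
    Fintype.card {v // v ≠ x} = Fintype.card V - 1 := by
  classical
  have h1 : Fintype.card {v // v = x} = 1 := Fintype.card_subtype_eq x
  have := Fintype.card_subtype_compl (fun v : V => v = x)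
  simp only [h1] at this
  convert this using 2

lemma graceful_compl {V : Type*} [Fintype V] {G : SimpleGraph V} {f : V → ℕ}
    (hf : GracefulLabeling G f) :
    GracefulLabeling G (fun v => Fintype.card V - 1 - f v) := by
  obtain ⟨hinj, hbd, hsurj, hlab⟩ := hf
  refine ⟨?_, ?_, ?_, ?_⟩
  · intro u v huv
    have h1 := hbd u; have h2 := hbd v
    have h3 : Fintype.card V - 1 - f u = Fintype.card V - 1 - f v := huv
    exact hinj (by omega : f u = f v)
  · intro v
    have h1 := hbd v
    have : 0 < Fintype.card V := Fintype.card_pos_iff.mpr ⟨v⟩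
    show Fintype.card V - 1 - f v < Fintype.card V
    omega
  · intro k hk
    obtain ⟨v, hv⟩ := hsurj (Fintype.card V - 1 - k) (by omega)
    refine ⟨v, ?_⟩
    show Fintype.card V - 1 - f v = k
    have := hbd v
    omega
  · have key : ∀ e ∈ G.edgeSet, edgeLabel (fun v => Fintype.card V - 1 - f v) e = edgeLabel f e := by
      intro e he
      induction e using Sym2.ind with
      | _ u v =>
        have h1 := hbd u; have h2 := hbd v
        simp only [edgeLabel_mk]
        omega
    intro e1 he1 e2 he2 h
    rw [key e1 he1, key e2 he2] at h
    exact hlab he1 he2 h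

lemma graceful_extend {V : Type*} [Fintype V] [DecidableEq V] {G : SimpleGraph V} {x w : V}
    (hxw : G.Adj x w) (hleaf : ∀ y, G.Adj x y → y = w)
    [Fintype {v // v ≠ x}]
    {f' : {v // v ≠ x} → ℕ}
    (hf' : GracefulLabeling (G.comap (Subtype.val : {v // v ≠ x} → V)) f')
    (hw0 : f' ⟨w, hxw.ne'⟩ = 0) :
    GracefulLabeling G (fun v => if h : v = x then Fintype.card V - 1 else f' ⟨v, h⟩) := by
  classical
  obtain ⟨hinj, hbd, hsurj, hlab⟩ := hf'
  set n := Fintype.card V with hn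
  have hn1 : 1 ≤ n := Fintype.card_pos_iff.mpr ⟨x⟩
  have hcard : Fintype.card {v // v ≠ x} = n - 1 := card_ne x
  have hlt : ∀ v : {v // v ≠ x}, f' v < n - 1 := fun v => hcard ▸ hbd v
  set g : V → ℕ := fun v => if h : v = x then n - 1 else f' ⟨v, h⟩ with hg
  have hgx : g x = n - 1 := by simp [hg]
  have hgne : ∀ (v : V) (h : v ≠ x), g v = f' ⟨v, h⟩ := by intro v h; simp [hg, h]
  refine ⟨?_, ?_, ?_, ?_⟩
  · intro u v huv
    by_cases hu : u = x <;> by_cases hv : v = x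
    · rw [hu, hv]
    · rw [hu, hgx, hgne v hv] at huv; have := hlt ⟨v, hv⟩; omega
    · rw [hv, hgx, hgne u hu] at huv; have := hlt ⟨u, hu⟩; omega
    · rw [hgne u hu, hgne v hv] at huv
      exact congrArg Subtype.val (hinj huv)
  · intro v
    by_cases hv : v = x
    · rw [hv, hgx]; omega
    · rw [hgne v hv]; have := hlt ⟨v, hv⟩; omega
  · intro k hk
    by_cases hk' : k = n - 1
    · exact ⟨x, by rw [hgx, hk']⟩
    · obtain ⟨v, hv⟩ := hsurj k (by omega)
      exact ⟨v.val, by rw [hgne v.val v.2, Subtype.coe_eta]; exact hv⟩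
  · have hnorm1 : ∀ e ∈ G.edgeSet, x ∈ e → e = s(x, w) ∧ edgeLabel g e = n - 1 := by
      intro e he hx
      induction e using Sym2.ind with
      | _ u v =>
        rw [SimpleGraph.mem_edgeSet] at he
        rcases Sym2.mem_iff.mp hx with h | h
        · subst h
          have hv : v = w := hleaf v he
          subst hv
          refine ⟨rfl, ?_⟩
          rw [edgeLabel_mk, hgx, hgne v hxw.ne']
          rw [hw0]; omega
        · subst h
          have hu : u = w := hleaf u he.symm
          subst hu
          refine ⟨Sym2.eq_swap, ?_⟩
          rw [edgeLabel_mk, hgx, hgne u hxw.ne']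
          rw [hw0]; omega
    have hnorm2 : ∀ e ∈ G.edgeSet, x ∉ e →
        edgeLabel g e < n - 1 ∧ ∃ e' : Sym2 {v // v ≠ x},
          e' ∈ (G.comap (Subtype.val : {v // v ≠ x} → V)).edgeSet ∧
          Sym2.map Subtype.val e' = e ∧ edgeLabel f' e' = edgeLabel g e := by
      intro e he hx
      induction e using Sym2.ind with
      | _ u v =>
        rw [SimpleGraph.mem_edgeSet] at he
        rw [Sym2.mem_iff] at hx
        push_neg at hx
        have hu : u ≠ x := fun h => hx.1 h.symm
        have hv : v ≠ x := fun h => hx.2 h.symm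
        have l1 := hlt ⟨u, hu⟩
        have l2 := hlt ⟨v, hv⟩
        refine ⟨?_, s(⟨u, hu⟩, ⟨v, hv⟩), ?_, ?_, ?_⟩
        · rw [edgeLabel_mk, hgne u hu, hgne v hv]; omega
        · rw [SimpleGraph.mem_edgeSet]; exact he
        · rw [Sym2.map_pair_eq]
        · rw [edgeLabel_mk, edgeLabel_mk, hgne u hu, hgne v hv]
    intro e1 he1 e2 he2 h
    by_cases h1 : x ∈ e1 <;> by_cases h2 : x ∈ e2
    · rw [(hnorm1 e1 he1 h1).1, (hnorm1 e2 he2 h2).1]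
    · have := (hnorm1 e1 he1 h1).2; have := (hnorm2 e2 he2 h2).1; omega
    · have := (hnorm2 e1 he1 h1).1; have := (hnorm1 e2 he2 h2).2; omega
    · obtain ⟨_, e1', hm1, hmap1, hl1⟩ := hnorm2 e1 he1 h1
      obtain ⟨_, e2', hm2, hmap2, hl2⟩ := hnorm2 e2 he2 h2
      have : e1' = e2' := hlab hm1 hm2 (by rw [hl1, hl2, h])
      rw [← hmap1, ← hmap2, this]

section lift2
variable {V : Type*} {G : SimpleGraph V} {x : V}

def liftWalk : ∀ {u v : V} (w : G.Walk u v) (hw : ∀ z ∈ w.support, z ≠ x),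
    (G.comap (Subtype.val : {v // v ≠ x} → V)).Walk
      ⟨u, hw u w.start_mem_support⟩ ⟨v, hw v w.end_mem_support⟩
  | _, _, SimpleGraph.Walk.nil, _ => SimpleGraph.Walk.nil
  | _, _, SimpleGraph.Walk.cons h q, hw =>
      SimpleGraph.Walk.cons (by exact h)
        (liftWalk q (fun z hz => hw z (by simp [hz, Walk.support_cons])))

lemma support_liftWalk : ∀ {u v : V} (w : G.Walk u v) (hw : ∀ z ∈ w.support, z ≠ x),
    ((liftWalk w hw).support.map Subtype.val) = w.support
  | _, _, SimpleGraph.Walk.nil, _ => by simp [liftWalk]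
  | _, _, SimpleGraph.Walk.cons h q, hw => by
      exact congrArg (List.cons _) (support_liftWalk q _)

lemma mem_support_liftWalk {u v : V} {w : G.Walk u v} {hw : ∀ z ∈ w.support, z ≠ x}
    {z : {v // v ≠ x}} : z ∈ (liftWalk w hw).support ↔ (z : V) ∈ w.support := by
  constructor
  · intro h
    rw [← support_liftWalk w hw]
    exact List.mem_map_of_mem h
  · intro h
    rw [← support_liftWalk w hw] at h
    obtain ⟨z', hz', he⟩ := List.mem_map.mp h
    rwa [Subtype.ext he] at hz'

lemma isPath_liftWalk {u v : V} {w : G.Walk u v} {hw : ∀ z ∈ w.support, z ≠ x}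
    (h : w.IsPath) : (liftWalk w hw).IsPath := by
  rw [Walk.isPath_def]
  exact List.Nodup.of_map Subtype.val (by rw [support_liftWalk]; exact h.support_nodup)

lemma isAcyclic_comap (hac : G.IsAcyclic) :
    (G.comap (Subtype.val : {v // v ≠ x} → V)).IsAcyclic := by
  intro v c hc
  exact hac (c.map (SimpleGraph.Embedding.comap (Function.Embedding.subtype _) G).toHom)
    (hc.map Subtype.val_injective)

end lift2

universe u

lemma graceful_aux : ∀ (n : ℕ), ∀ {V : Type u} [Fintype V] (G : SimpleGraph V),
    G.IsAcyclic → ∀ {a b : V} (p : G.Walk a b), p.IsPath →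
    (∀ v, v ∈ p.support ∨ ∃ u ∈ p.support, G.Adj u v) →
    Fintype.card V = n →
    ∃ f : V → ℕ, GracefulLabeling G f ∧ f b = 0 := by
  intro n
  induction n using Nat.strong_induction_on with
  | _ n IH =>
  intro V _ G hac a b p hp hdom hn
  classical
  by_cases hsmall : Fintype.card V ≤ 1
  · have hsub : Subsingleton V := Fintype.card_le_one_iff_subsingleton.mp hsmall
    refine ⟨fun _ => 0, ⟨?_, ?_, ?_, ?_⟩, rfl⟩
    · intro u v _; exact Subsingleton.elim u v
    · intro v; show 0 < Fintype.card V; exact Fintype.card_pos_iff.mpr ⟨v⟩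
    · intro k hk; refine ⟨b, ?_⟩; show 0 = k; omega
    · have hempty : ∀ e ∈ G.edgeSet, False := by
        intro e he
        induction e using Sym2.ind with
        | _ u v =>
          rw [SimpleGraph.mem_edgeSet] at he
          exact he.ne (Subsingleton.elim u v)
      intro e1 he1 e2 he2 _
      exact ((hempty e1 he1)).elim
  · have hn2 : 2 ≤ Fintype.card V := by omega
    have hpu := isAcyclic_iff_path_unique.mp hac
    have huniq : ∀ {y z : V} (p1 p2 : G.Walk y z), p1.IsPath → p2.IsPath → p1 = p2 := by
      intro y z p1 p2 h1 h2
      exact congrArg Subtype.val (hpu ⟨p1, h1⟩ ⟨p2, h2⟩)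
    by_cases hex : ∃ x, x ∉ p.support ∧ G.Adj b x
    · -- Case 1 : pendant leaf x at b, off the spine
      obtain ⟨x, hxs, hbx⟩ := hex
      have hxb' : x ≠ b := hbx.ne'
      have hleaf : ∀ y, G.Adj x y → y = b := by
        intro y hy
        by_contra hyb
        have hyx : y ≠ x := hy.ne'
        have hP2 : (Walk.cons hy.symm (Walk.cons hbx.symm Walk.nil) : G.Walk y b).IsPath := by
          apply Walk.IsPath.cons
          · exact Walk.IsPath.nil.cons (by simp [hxb'])
          · simp [hyx, hyb]
        by_cases hys : y ∈ p.support
        · have hP1 : (p.dropUntil y hys).IsPath := hp.dropUntil hys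
          have heq := huniq _ _ hP1 hP2
          have hxin : x ∈ (p.dropUntil y hys).support := by rw [heq]; simp
          exact hxs (Walk.support_dropUntil_subset _ _ hxin)
        · obtain ⟨u, hu, huy⟩ := (hdom y).resolve_left hys
          have hP1 : (Walk.cons huy.symm (p.dropUntil u hu)).IsPath := by
            apply (hp.dropUntil hu).cons
            intro h
            exact hys (Walk.support_dropUntil_subset _ _ h)
          have heq := huniq _ _ hP1 hP2
          have hxin : x ∈ (Walk.cons huy.symm (p.dropUntil u hu)).support := by
            rw [heq]; simp
          rw [Walk.support_cons] at hxin
          rcases List.mem_cons.mp hxin with h | h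
          · exact hyx h.symm
          · exact hxs (Walk.support_dropUntil_subset _ _ h)
      have hne : ∀ z ∈ p.support, z ≠ x := fun z hz h => hxs (h ▸ hz)
      have hp' := isPath_liftWalk (hw := hne) hp
      have hdom' : ∀ v : {v // v ≠ x}, v ∈ (liftWalk p hne).support ∨
          ∃ u ∈ (liftWalk p hne).support,
            (G.comap (Subtype.val : {v // v ≠ x} → V)).Adj u v := by
        intro v
        rcases hdom v.val with h | ⟨u, hu, huv⟩
        · left; exact mem_support_liftWalk.mpr h
        · right; exact ⟨⟨u, hne u hu⟩, mem_support_liftWalk.mpr hu, huv⟩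
      have hcard' : Fintype.card {v // v ≠ x} = n - 1 := by rw [card_ne x, hn]
      obtain ⟨f', hf', hf'b⟩ := IH (n - 1) (by omega) _ (isAcyclic_comap hac)
        (liftWalk p hne) hp' hdom' hcard'
      refine ⟨fun v => if h : v = x then Fintype.card V - 1 else f' ⟨v, h⟩,
        graceful_extend hbx.symm hleaf hf' ?_, ?_⟩
      · exact hf'b
      · show (if h : b = x then Fintype.card V - 1 else f' ⟨b, h⟩) = 0
        rw [dif_neg hbx.ne]
        exact hf'b
    · -- Case 2 : b is a leaf of the tree, delete it
      have hab : a ≠ b := by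
        rintro rfl
        have hnil : p = Walk.nil := Walk.isPath_iff_eq_nil.mp hp
        obtain ⟨v, hvb⟩ := Fintype.exists_ne_of_one_lt_card (by omega) a
        rcases hdom v with h | ⟨u, hu, huv⟩
        · rw [hnil] at h; simp at h; exact hvb h
        · rw [hnil] at hu; simp at hu; subst hu
          refine hex ⟨v, ?_, huv⟩
          rw [hnil]; simp [hvb]
      obtain ⟨c, hbc, qq, hq⟩ := Walk.exists_eq_cons_of_ne hab.symm p.reverse
      have hpr : p.reverse.IsPath := hp.reverse
      rw [hq] at hpr
      have hqq : qq.IsPath := hpr.of_cons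
      have hbqq : b ∉ qq.support := ((Walk.cons_isPath_iff _ _).mp hpr).2
      have hsupp : ∀ z, z ∈ p.support ↔ z = b ∨ z ∈ qq.support := by
        intro z
        have h1 : z ∈ p.support ↔ z ∈ p.reverse.support := by
          rw [Walk.support_reverse]; exact (List.mem_reverse).symm
        rw [h1, hq, Walk.support_cons]
        simp [List.mem_cons]
      have hleafb : ∀ y, G.Adj b y → y = c := by
        intro y hy
        have hyS : y ∈ p.support := by
          by_contra h; exact hex ⟨y, h, hy⟩
        have hyb : y ≠ b := hy.ne'
        have hyqq : y ∈ qq.support := ((hsupp y).mp hyS).resolve_left hyb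
        have hr3 : (Walk.cons hbc (qq.takeUntil y hyqq)).IsPath :=
          (hqq.takeUntil hyqq).cons (fun h => hbqq (Walk.support_takeUntil_subset _ _ h))
        have hr2 : (Walk.cons hy Walk.nil : G.Walk b y).IsPath :=
          Walk.IsPath.nil.cons (by simp [hyb.symm])
        have heq := huniq _ _ hr3 hr2
        have := congrArg (fun w => Walk.getVert w 1) heq
        simp only [Walk.getVert_cons_succ, Walk.getVert_zero] at this
        exact this.symm
      have hneq : ∀ z ∈ qq.support, z ≠ b := fun z hz h => hbqq (h ▸ hz)
      have hp'' := (isPath_liftWalk (hw := hneq) hqq).reverse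
      have hdom'' : ∀ v : {v // v ≠ b}, v ∈ (liftWalk qq hneq).reverse.support ∨
          ∃ u ∈ (liftWalk qq hneq).reverse.support,
            (G.comap (Subtype.val : {v // v ≠ b} → V)).Adj u v := by
        intro v
        rcases hdom v.val with h | ⟨u, hu, huv⟩
        · left
          rw [Walk.support_reverse]
          exact List.mem_reverse.mpr
            (mem_support_liftWalk.mpr (((hsupp _).mp h).resolve_left v.2))
        · by_cases hub : u = b
          · subst hub
            left
            have hvc : v.val = c := hleafb v.val huv
            rw [Walk.support_reverse]
            apply List.mem_reverse.mpr
            apply mem_support_liftWalk.mpr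
            rw [hvc]
            exact qq.start_mem_support
          · right
            refine ⟨⟨u, hub⟩, ?_, huv⟩
            rw [Walk.support_reverse]
            exact List.mem_reverse.mpr
              (mem_support_liftWalk.mpr (((hsupp u).mp hu).resolve_left hub))
      have hcard'' : Fintype.card {v // v ≠ b} = n - 1 := by rw [card_ne b, hn]
      obtain ⟨f', hf', hf'c⟩ := IH (n - 1) (by omega) _ (isAcyclic_comap hac)
        (liftWalk qq hneq).reverse hp'' hdom'' hcard''
      have hg : GracefulLabeling G
          (fun v => if h : v = b then Fintype.card V - 1 else f' ⟨v, h⟩) :=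
        graceful_extend hbc hleafb hf' hf'c
      refine ⟨fun v => Fintype.card V - 1 -
        (if h : v = b then Fintype.card V - 1 else f' ⟨v, h⟩), graceful_compl hg, ?_⟩
      show Fintype.card V - 1 - (if h : b = b then Fintype.card V - 1 else f' ⟨b, h⟩) = 0
      rw [dif_pos rfl]
      omega



/-- Every caterpillar (a tree all of whose vertices are within distance 1 of a
central path) is graceful. -/
theorem stmt7 {V : Type*} [Fintype V] (G : SimpleGraph V) (hT : G.IsTree)
    (hcat : ∃ (a b : V) (p : G.Walk a b), p.IsPath ∧
      ∀ v : V, ∃ u ∈ p.support, G.dist u v ≤ 1) :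
    ∃ f : V → ℕ, GracefulLabeling G f := by
  obtain ⟨a, b, p, hp, hdom⟩ := hcat
  have hconn := hT.isConnected
  have hdom' : ∀ v, v ∈ p.support ∨ ∃ u ∈ p.support, G.Adj u v := by
    intro v
    obtain ⟨u, hu, hd⟩ := hdom v
    by_cases h0 : G.dist u v = 0
    · left
      rwa [← hconn.dist_eq_zero_iff.mp h0]
    · right
      exact ⟨u, hu, SimpleGraph.dist_eq_one_iff_adj.mp (by omega)⟩
  obtain ⟨f, hf, _⟩ := graceful_aux (Fintype.card V) G hT.IsAcyclic p hp hdom' rfl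
  exact ⟨f, hf⟩
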